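/- arXiv:cs/0606026 — 5 statements merged into one kernel-verified Lean document; each statement's English description precedes it below -/
import Mathlib

section
/- A set A ⊆ F_2^r is generic (r,m)-erasure reducing if and only if for every binary r×m matrix M of rank m there exists a vector a ∈ A such that the vector aM has Hamming weight exactly 1. -/
/-- `A` is generic `(r,m)`-erasure reducing: for every `n ≥ r`, every rank-`r`
parity check matrix `H` of size `r × n`, and every `C`-correctable erasure
pattern `E` of size `m` (i.e. `E` contains no support of a nonzero codeword of
the code with parity check matrix `H`), some `a ∈ A` gives a parity check
`a ᵥ* H` with exactly one nonzero entry inside `E`. -/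
def GenericReducing (r m : ℕ) (A : Set (Fin r → ZMod 2)) : Prop :=
  ∀ (n : ℕ), r ≤ n → ∀ H : Matrix (Fin r) (Fin n) (ZMod 2), H.rank = r →
    ∀ E : Finset (Fin n), E.card = m →
      (¬ ∃ x : Fin n → ZMod 2, x ≠ 0 ∧ H.mulVec x = 0 ∧
          {j | x j ≠ 0} ⊆ (E : Set (Fin n))) →
      ∃ a ∈ A, (E.filter (fun j => Matrix.vecMul a H j ≠ 0)).card = 1

open Matrix Module Finset

/-- For a matrix over a field, full column rank is equivalent to injectivity of `mulVecLin`. -/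
lemma rank_eq_card_iff_inj {r m : ℕ} (M : Matrix (Fin r) (Fin m) (ZMod 2)) :
    M.rank = m ↔ Function.Injective M.mulVecLin := by
  have h := M.mulVecLin.finrank_range_add_finrank_ker
  rw [Module.finrank_fin_fun] at h
  constructor
  · intro hr
    rw [Matrix.rank] at hr
    have hker : finrank (ZMod 2) (LinearMap.ker M.mulVecLin) = 0 := by omega
    rw [← LinearMap.ker_eq_bot]
    exact Submodule.finrank_eq_zero.mp hker
  · intro hinj
    rw [Matrix.rank, LinearMap.finrank_range_of_inj hinj, Module.finrank_fin_fun]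

theorem stmt0 (r m : ℕ) (hm : 1 ≤ m) (hmr : m ≤ r) (A : Set (Fin r → ZMod 2)) :
    GenericReducing r m A ↔
      ∀ M : Matrix (Fin r) (Fin m) (ZMod 2), M.rank = m →
        ∃ a ∈ A, hammingNorm (Matrix.vecMul a M) = 1 := by
  constructor
  · -- forward direction
    intro hGR M hM
    -- build H = [M | I] of size r × (m + r)
    set H : Matrix (Fin r) (Fin (m + r)) (ZMod 2) :=
      Matrix.of fun i j =>
        Sum.elim (fun j' => M i j') (fun j' => if i = j' then (1 : ZMod 2) else 0)
          (finSumFinEquiv.symm j) with hHdef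
    have hHval : ∀ i (s : Fin m ⊕ Fin r), H i (finSumFinEquiv s) =
        Sum.elim (fun j' => M i j') (fun j' => if i = j' then (1 : ZMod 2) else 0) s := by
      intro i s
      simp [hHdef]
    have hMinj : Function.Injective M.mulVecLin := (rank_eq_card_iff_inj M).mp hM
    -- rank H = r via surjectivity
    have hHrank : H.rank = r := by
      have hsurj : Function.Surjective H.mulVecLin := by
        intro v
        refine ⟨fun j => Sum.elim (fun _ => 0) v (finSumFinEquiv.symm j), ?_⟩
        ext i
        show H.mulVec _ i = v i
        rw [Matrix.mulVec, dotProduct,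
          ← Equiv.sum_comp finSumFinEquiv
            (fun j => H i j * Sum.elim (fun _ => 0) v (finSumFinEquiv.symm j))]
        simp only [Equiv.symm_apply_apply, hHval]
        rw [Fintype.sum_sum_type]
        simp [Finset.sum_ite_eq]
      rw [Matrix.rank, LinearMap.range_eq_top.mpr hsurj, finrank_top, Module.finrank_fin_fun]
    set E : Finset (Fin (m + r)) :=
      Finset.univ.image (fun j : Fin m => finSumFinEquiv (Sum.inl j)) with hEdef
    have hEcard : E.card = m := by
      rw [hEdef, Finset.card_image_of_injective _
        (fun a b hab => Sum.inl.inj (finSumFinEquiv.injective hab))]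
      simp
    have hcorr : ¬ ∃ x : Fin (m + r) → ZMod 2, x ≠ 0 ∧ H.mulVec x = 0 ∧
        {j | x j ≠ 0} ⊆ (E : Set (Fin (m + r))) := by
      rintro ⟨x, hx0, hxH, hsupp⟩
      -- x vanishes on the inr coordinates
      have hxr : ∀ j' : Fin r, x (finSumFinEquiv (Sum.inr j')) = 0 := by
        intro j'
        by_contra hne
        have := hsupp hne
        rw [hEdef] at this
        simp only [Finset.coe_image, Set.mem_image, Finset.coe_univ, Set.image_univ,
          Set.mem_range] at this
        obtain ⟨j, hj⟩ := this
        exact Sum.inl_ne_inr (finSumFinEquiv.injective hj)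
      set y : Fin m → ZMod 2 := fun j => x (finSumFinEquiv (Sum.inl j)) with hydef
      have hMy : M.mulVec y = 0 := by
        ext i
        have := congrFun hxH i
        rw [Matrix.mulVec, dotProduct,
          ← Equiv.sum_comp finSumFinEquiv (fun j => H i j * x j),
          Fintype.sum_sum_type] at this
        simp only [hHval, Sum.elim_inl, Sum.elim_inr, hxr, mul_zero,
          Finset.sum_const_zero, add_zero] at this
        simpa [Matrix.mulVec, dotProduct, hydef] using this
      have hy0 : y = 0 := by
        have : M.mulVecLin y = M.mulVecLin 0 := by simpa using hMy
        exact hMinj this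
      apply hx0
      funext j
      cases hs : finSumFinEquiv.symm j with
      | inl j' =>
        have hj : j = finSumFinEquiv (Sum.inl j') := (Equiv.symm_apply_eq _).mp hs
        rw [hj]
        exact congrFun hy0 j'
      | inr j' =>
        have hj : j = finSumFinEquiv (Sum.inr j') := (Equiv.symm_apply_eq _).mp hs
        rw [hj]
        exact hxr j'
    obtain ⟨a, haA, hacard⟩ := hGR (m + r) (Nat.le_add_left r m) H hHrank E hEcard hcorr
    refine ⟨a, haA, ?_⟩
    have hvec : ∀ j : Fin m, Matrix.vecMul a M j
        = Matrix.vecMul a H (finSumFinEquiv (Sum.inl j)) := by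
      intro j
      simp [Matrix.vecMul, dotProduct, hHdef]
    rw [hammingNorm]
    rw [show ({i | Matrix.vecMul a M i ≠ 0} : Finset (Fin m))
        = Finset.univ.filter (fun j => Matrix.vecMul a M j ≠ 0) from rfl]
    rw [← hacard, hEdef]
    rw [Finset.filter_image]
    rw [Finset.card_image_of_injective _
      (fun p q hpq => Sum.inl.inj (finSumFinEquiv.injective hpq))]
    congr 1
    ext j
    simp [hvec]
    exact (Finset.mem_filter (p := fun x => ¬ (Matrix.vecMul a H) (Fin.castAdd r x) = 0).trans (and_iff_right (Finset.mem_univ (j : Fin m)))).symm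
  · -- backward direction
    intro hyp
    intro n hn H hH E hE hcorr
    set e := E.orderIsoOfFin hE with hedef
    set M : Matrix (Fin r) (Fin m) (ZMod 2) := Matrix.of fun i j => H i (e j) with hMdef
    have hMinj : Function.Injective M.mulVecLin := by
      rw [← LinearMap.ker_eq_bot, LinearMap.ker_eq_bot']
      intro y hy
      by_contra hy0
      apply hcorr
      classical
      refine ⟨fun j => if h : j ∈ E then y (e.symm ⟨j, h⟩) else 0, ?_, ?_, ?_⟩
      · intro hzero
        apply hy0
        funext j'
        have h1 : ((e j' : E) : Fin n) ∈ E := (e j').2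
        have := congrFun hzero (e j')
        simp only [h1, dif_pos] at this
        rw [show (⟨((e j' : E) : Fin n), h1⟩ : E) = e j' from Subtype.ext rfl,
          OrderIso.symm_apply_apply] at this
        exact this
      · -- H.mulVec x = 0
        have hyM : M.mulVec y = 0 := by simpa using hy
        ext i
        show (∑ j : Fin n, H i j * _) = 0
        rw [← Finset.sum_subset (Finset.subset_univ E)
          (by intro j _ hj; simp [hj])]
        rw [← Finset.sum_coe_sort E (fun j => H i j * (if h : j ∈ E then y (e.symm ⟨j, h⟩) else 0))]
        rw [← Equiv.sum_comp e.toEquiv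
          (fun j : E => H i j * (if h : (j : Fin n) ∈ E then y (e.symm ⟨(j : Fin n), h⟩) else 0))]
        have := congrFun hyM i
        rw [Matrix.mulVec, dotProduct] at this
        simp only [Pi.zero_apply] at this
        rw [← this]
        apply Finset.sum_congr rfl
        intro j' _
        have h1 : ((e.toEquiv j' : E) : Fin n) ∈ E := (e.toEquiv j').2
        rw [dif_pos h1,
          show (⟨((e.toEquiv j' : E) : Fin n), h1⟩ : E) = e j' from Subtype.ext rfl,
          OrderIso.symm_apply_apply]
        rfl
      · intro j hj
        simp only [Set.mem_setOf_eq] at hj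
        rw [Finset.mem_coe]
        by_contra hjE
        simp [hjE] at hj
    have hMrank : M.rank = m := (rank_eq_card_iff_inj M).mpr hMinj
    obtain ⟨a, haA, hacard⟩ := hyp M hMrank
    refine ⟨a, haA, ?_⟩
    rw [hammingNorm] at hacard
    rw [← hacard]
    rw [show ({i | Matrix.vecMul a M i ≠ 0} : Finset (Fin m))
        = Finset.univ.filter (fun j => Matrix.vecMul a M j ≠ 0) from rfl]
    have hvec : ∀ j : Fin m, Matrix.vecMul a M j = Matrix.vecMul a H (e j) := by
      intro j
      simp [Matrix.vecMul, dotProduct, hMdef]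
    symm
    apply Finset.card_bij (fun j _ => ((e j : E) : Fin n))
    · intro j hj
      simp only [Finset.mem_filter] at hj ⊢
      exact ⟨(e j).2, by rw [← hvec]; exact hj.2⟩
    · intro p hp q hq hpq
      have : (e p : E) = e q := Subtype.ext hpq
      exact e.injective this
    · intro j hj
      simp only [Finset.mem_filter] at hj
      refine ⟨e.symm ⟨j, hj.1⟩, ?_, ?_⟩
      · simp only [Finset.mem_filter, Finset.mem_univ, true_and]
        rw [hvec, OrderIso.apply_symm_apply]
        exact hj.2
      · rw [OrderIso.apply_symm_apply]
end

section
/- If 2 ≤ m ≤ r and A ⊆ F_2^r has the property that for every r×m binary matrix of rank m there is a ∈ A with wt(aM)=1, then A also has this property for r×(m-1) matrices: for every r×(m-1) binary matrix M' of rank m-1 there exists a ∈ A with wt(aM')=1. -/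
open Matrix Submodule Module

theorem stmt1 (r m : ℕ) (hm : 2 ≤ m) (hmr : m ≤ r) (A : Set (Fin r → ZMod 2))
    (hA : ∀ M : Matrix (Fin r) (Fin m) (ZMod 2), M.rank = m →
        ∃ a ∈ A, hammingNorm (Matrix.vecMul a M) = 1) :
    ∀ M' : Matrix (Fin r) (Fin (m - 1)) (ZMod 2), M'.rank = m - 1 →
      ∃ a ∈ A, hammingNorm (Matrix.vecMul a M') = 1 := by
  intro M' hM'
  have hm1m : m - 1 < m := by omega
  have h0m1 : 0 < m - 1 := by omega
  set p : Submodule (ZMod 2) (Fin r → ZMod 2) :=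
    Submodule.span (ZMod 2) (Set.range M'ᵀ) with hp
  have hfp : Module.finrank (ZMod 2) p = m - 1 := by
    rw [hp, show Set.range M'ᵀ = Set.range M'.col from rfl, ← Matrix.rank_eq_finrank_span_cols, hM']
  -- there is a vector outside the column span of M'
  obtain ⟨v, hv⟩ : ∃ v, v ∉ p := by
    by_contra h
    push_neg at h
    have htop : p = ⊤ := eq_top_iff.2 fun x _ => h x
    rw [htop, finrank_top, Module.finrank_fin_fun] at hfp
    omega
  have hvne : v ≠ 0 := fun h => hv (h ▸ zero_mem p)
  -- build the extended matrix
  set cols : Fin m → (Fin r → ZMod 2) := fun j =>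
    if h : (j : ℕ) < m - 1 then
      (if (j : ℕ) = 0 then M'ᵀ ⟨j, h⟩ + v else M'ᵀ ⟨j, h⟩)
    else v with hcols
  set M : Matrix (Fin r) (Fin m) (ZMod 2) := (Matrix.of cols)ᵀ with hMdef
  have hMT : Mᵀ = cols := rfl
  set j0 : Fin m := ⟨0, by omega⟩ with hj0
  set jl : Fin m := ⟨m - 1, hm1m⟩ with hjl
  have hcols_l : cols jl = v := by
    simp only [hcols]; rw [dif_neg (by simp [hjl])]
  have hcols_0 : cols j0 = M'ᵀ ⟨0, h0m1⟩ + v := by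
    simp only [hcols]; rw [dif_pos (by simpa [hj0] using h0m1), if_pos (by simp [hj0])]
  have hcols_lt : ∀ (j : Fin m) (h : (j : ℕ) < m - 1), (j : ℕ) ≠ 0 →
      cols j = M'ᵀ ⟨j, h⟩ := by
    intro j h h0
    simp only [hcols]; rw [dif_pos h, if_neg h0]
  -- column span of M
  have hspan : Submodule.span (ZMod 2) (Set.range Mᵀ) =
      p ⊔ Submodule.span (ZMod 2) {v} := by
    apply le_antisymm
    · rw [Submodule.span_le]
      rintro x ⟨j, rfl⟩
      rw [hMT]
      by_cases h : (j : ℕ) < m - 1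
      · by_cases h0 : (j : ℕ) = 0
        · have hjj : j = j0 := Fin.ext (by simp [hj0, h0])
          rw [hjj, hcols_0]
          exact add_mem (Submodule.mem_sup_left
              (Submodule.subset_span (Set.mem_range_self _)))
            (Submodule.mem_sup_right (Submodule.subset_span rfl))
        · rw [hcols_lt j h h0]
          exact Submodule.mem_sup_left (Submodule.subset_span (Set.mem_range_self _))
      · have hjj : j = jl := Fin.ext (by simp [hjl]; omega)
        rw [hjj, hcols_l]
        exact Submodule.mem_sup_right (Submodule.subset_span rfl)
    · apply sup_le
      · rw [hp, Submodule.span_le]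
        rintro x ⟨j', rfl⟩
        by_cases h0 : (j' : ℕ) = 0
        · have hj' : j' = ⟨0, h0m1⟩ := Fin.ext h0
          have : M'ᵀ j' = cols j0 - cols jl := by
            rw [hcols_l, hcols_0, hj']; abel
          rw [this]
          exact sub_mem (Submodule.subset_span ⟨j0, rfl⟩) (Submodule.subset_span ⟨jl, rfl⟩)
        · have hlt : (j' : ℕ) < m := lt_trans j'.2 hm1m
          rw [show M'ᵀ j' = cols ⟨j', hlt⟩ from (hcols_lt ⟨j', hlt⟩ j'.2 h0).symm]
          exact Submodule.subset_span ⟨_, rfl⟩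
      · rw [Submodule.span_le, Set.singleton_subset_iff, ← hcols_l]
        exact Submodule.subset_span ⟨jl, rfl⟩
  -- rank of M is m
  have hdisj : Disjoint p (Submodule.span (ZMod 2) {v}) := by
    rw [Submodule.disjoint_span_singleton]
    intro h; exact absurd h hv
  have hrank : M.rank = m := by
    rw [Matrix.rank_eq_finrank_span_cols, show Set.range M.col = Set.range Mᵀ from rfl, hspan]
    have := Submodule.finrank_sup_add_finrank_inf_eq p (Submodule.span (ZMod 2) {v})
    rw [disjoint_iff.mp hdisj, finrank_bot, add_zero, hfp,
      finrank_span_singleton hvne] at this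
    omega
  obtain ⟨a, haA, ha⟩ := hA M hrank
  refine ⟨a, haA, ?_⟩
  -- now the Hamming weight argument
  set w : Fin m → ZMod 2 := Matrix.vecMul a M with hw
  set w' : Fin (m - 1) → ZMod 2 := Matrix.vecMul a M' with hw'
  have hwj : ∀ j : Fin m, w j = a ⬝ᵥ cols j := fun j => rfl
  have hw'j : ∀ j' : Fin (m - 1), w' j' = a ⬝ᵥ M'ᵀ j' := fun j' => rfl
  -- relations between w' and w
  have hrel0 : ∀ j' : Fin (m - 1), (j' : ℕ) = 0 → w' j' = w j0 + w jl := by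
    intro j' h0
    have hj' : j' = ⟨0, h0m1⟩ := Fin.ext h0
    rw [hw'j, hwj, hwj, hcols_0, hcols_l, dotProduct_add, hj']
    have : (a ⬝ᵥ v) + (a ⬝ᵥ v) = 0 := by
      generalize a ⬝ᵥ v = x
      fin_cases x <;> decide
    rw [add_assoc, this, add_zero]
  have hrelne : ∀ j' : Fin (m - 1), (j' : ℕ) ≠ 0 →
      w' j' = w ⟨j', lt_trans j'.2 hm1m⟩ := by
    intro j' h0
    rw [hw'j, hwj, hcols_lt _ j'.2 h0]
  -- the unique support point of w
  rw [hammingNorm, Finset.card_eq_one] at ha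
  obtain ⟨k, hk⟩ := ha
  have hkmem : ∀ j : Fin m, w j ≠ 0 ↔ j = k := by
    intro j
    constructor
    · intro h
      have : j ∈ ({j : Fin m | w j ≠ 0} : Finset (Fin m)) := by
        simp [h]
      rw [hk] at this; simpa using this
    · intro h
      rw [h]
      have : k ∈ Finset.filter (fun i => w i ≠ 0) Finset.univ := by
        rw [hk]; simp
      simpa using this
  have hwk : w k ≠ 0 := (hkmem k).2 rfl
  have hwo : ∀ j : Fin m, j ≠ k → w j = 0 := by
    intro j hj
    by_contra h
    exact hj ((hkmem j).1 h)
  -- the support point of w'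
  have hklt : (k : ℕ) < m := k.2
  set k' : Fin (m - 1) :=
    if h : (k : ℕ) = 0 ∨ (k : ℕ) = m - 1 then ⟨0, h0m1⟩
    else ⟨k, by omega⟩ with hk'
  have key : ∀ j' : Fin (m - 1), w' j' ≠ 0 ↔ j' = k' := by
    intro j'
    by_cases h0 : (j' : ℕ) = 0
    · rw [hrel0 j' h0]
      by_cases hkc : (k : ℕ) = 0 ∨ (k : ℕ) = m - 1
      · have hk'0 : k' = ⟨0, h0m1⟩ := by rw [hk', dif_pos hkc]
        have hj'eq : j' = k' := by rw [hk'0]; exact Fin.ext h0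
        rcases hkc with hkc | hkc
        · have hkj0 : k = j0 := Fin.ext (by simp [hj0, hkc])
          have hjlne : jl ≠ k := by
            rw [hkj0]
            intro h
            have h2 : m - 1 = 0 := by simpa [hjl, hj0] using congrArg Fin.val h
            omega
          rw [hwo jl hjlne, add_zero, ← hkj0]
          simp [hwk, hj'eq]
        · have hkjl : k = jl := Fin.ext (by simp [hjl, hkc])
          have hj0ne : j0 ≠ k := by
            rw [hkjl]
            intro h
            have h2 : (0 : ℕ) = m - 1 := by simpa [hjl, hj0] using congrArg Fin.val h
            omega
          rw [hwo j0 hj0ne, zero_add, ← hkjl]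
          simp [hwk, hj'eq]
      · push_neg at hkc
        have hj0ne : j0 ≠ k := fun h => hkc.1 (by rw [← h])
        have hjlne : jl ≠ k := fun h => hkc.2 (by rw [← h])
        rw [hwo j0 hj0ne, hwo jl hjlne, add_zero]
        have hne : j' ≠ k' := by
          intro h
          rw [hk', dif_neg (by push_neg; exact hkc)] at h
          have h2 : (j' : ℕ) = (k : ℕ) := congrArg Fin.val h
          omega
        simp [hne]
    · rw [hrelne j' h0]
      by_cases hkc : (k : ℕ) = 0 ∨ (k : ℕ) = m - 1
      · have hne1 : (⟨(j' : ℕ), lt_trans j'.2 hm1m⟩ : Fin m) ≠ k := by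
          intro h
          have h2 : (j' : ℕ) = (k : ℕ) := congrArg Fin.val h
          have h3 := j'.2
          omega
        rw [hwo _ hne1]
        have hne2 : j' ≠ k' := by
          intro h
          rw [hk', dif_pos hkc] at h
          have h2 : (j' : ℕ) = 0 := congrArg Fin.val h
          exact h0 h2
        simp [hne2]
      · push_neg at hkc
        have hkm1 : (k : ℕ) < m - 1 := by omega
        have hk'v : k' = ⟨(k : ℕ), hkm1⟩ := by
          rw [hk', dif_neg (by push_neg; exact hkc)]
        constructor
        · intro h
          have heq : (⟨(j' : ℕ), lt_trans j'.2 hm1m⟩ : Fin m) = k := by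
            by_contra hne
            exact h (hwo _ hne)
          have hval : (j' : ℕ) = (k : ℕ) := congrArg Fin.val heq
          rw [hk'v]
          exact Fin.ext hval
        · intro h
          have hval : (j' : ℕ) = (k : ℕ) := by rw [h, hk'v]
          have heq : (⟨(j' : ℕ), lt_trans j'.2 hm1m⟩ : Fin m) = k := Fin.ext hval
          rw [heq]
          exact hwk
  rw [hammingNorm, Finset.card_eq_one]
  refine ⟨k', ?_⟩
  ext j'
  simp only [Finset.mem_filter, Finset.mem_univ, true_and, Finset.mem_singleton,
    Set.mem_setOf_eq]
  constructor
  · intro h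
    exact (key j').1 (by simpa using h)
  · rintro rfl
    simpa using (key k').2 rfl
end

section
/- For 2 ≤ m ≤ r, the set A_{r,m} = { a ∈ F_2^r : a_1 = 1 and wt(a) ≤ m } satisfies: for every binary r×m matrix M of rank m, there exists a ∈ A_{r,m} with wt(aM) = 1. -/
open Finset Submodule Module

private lemma zmod2_one {x : ZMod 2} (h : x ≠ 0) : x = 1 := by revert h; revert x; decide

theorem stmt3 (r m : ℕ) (hm : 2 ≤ m) (hmr : m ≤ r)
    (M : Matrix (Fin r) (Fin m) (ZMod 2)) (hM : M.rank = m) :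
    ∃ a : Fin r → ZMod 2, a ⟨0, by omega⟩ = 1 ∧ hammingNorm a ≤ m ∧
      hammingNorm (Matrix.vecMul a M) = 1 := by
  classical
  set i0 : Fin r := ⟨0, by omega⟩ with hi0def
  -- reduce to finding a suitable subset of rows
  suffices h : ∃ S : Finset (Fin r), i0 ∈ S ∧ S.card ≤ m ∧ ∃ j : Fin m,
      ∑ i ∈ S, M i = Pi.single j 1 by
    obtain ⟨S, h0, hcard, j, hsum⟩ := h
    refine ⟨fun i => if i ∈ S then 1 else 0, by simp [h0], ?_, ?_⟩
    · have : {i | (if i ∈ S then (1:ZMod 2) else 0) ≠ 0} = S := by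
        ext i; by_cases hi : i ∈ S <;> simp [hi]
      calc hammingNorm (fun i => if i ∈ S then (1:ZMod 2) else 0)
          = S.card := by rw [hammingNorm]; congr 1; ext i; by_cases hi : i ∈ S <;> simp [hi]
        _ ≤ m := hcard
    · have hvm : Matrix.vecMul (fun i => if i ∈ S then (1:ZMod 2) else 0) M
          = Pi.single j 1 := by
        rw [← hsum]
        ext k
        simp only [Matrix.vecMul, dotProduct, Finset.sum_apply, ite_mul, one_mul,
          zero_mul]
        erw [Finset.sum_ite_mem, Finset.univ_inter]
        exact (Finset.sum_apply _ _ _).symm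
      have h1 : (Finset.univ.filter fun k => (Pi.single j (1:ZMod 2) : Fin m → ZMod 2) k ≠ 0) = {j} := by
        ext k
        by_cases hk : k = j <;> simp [Pi.single_apply, hk]
      rw [hvm, hammingNorm, h1, Finset.card_singleton]
  -- rows span the whole space
  have hspan : span (ZMod 2) (Set.range M) = ⊤ := by
    apply Submodule.eq_top_of_finrank_eq
    rw [← Matrix.row.eq_def M, ← Matrix.rank_eq_finrank_span_row, hM, Module.finrank_pi]
    simp
  set v : Fin m → ZMod 2 := M i0 with hvdef
  -- extract a basis among the rows, containing v if v ≠ 0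
  obtain ⟨b, hbt, hvb, hbsp, hbli⟩ :
      ∃ b ⊆ Set.range M, (v ≠ 0 → v ∈ b) ∧ Set.range M ⊆ span (ZMod 2) b ∧
        LinearIndependent (ZMod 2) ((↑) : b → (Fin m → ZMod 2)) := by
    by_cases hv : v = 0
    · obtain ⟨b, h1, _, h3, h4⟩ := exists_linearIndepOn_id_extension
        (linearIndependent_empty (ZMod 2) (Fin m → ZMod 2))
        (Set.empty_subset (Set.range M))
      exact ⟨b, h1, fun h => absurd hv h, h3, h4⟩
    · obtain ⟨b, h1, h2, h3, h4⟩ := exists_linearIndepOn_id_extension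
        ((linearIndepOn_singleton_iff (R := ZMod 2) (v := id) (i := v)).2 hv)
        (show ({v} : Set (Fin m → ZMod 2)) ⊆ Set.range M from
          Set.singleton_subset_iff.2 ⟨i0, rfl⟩)
      exact ⟨b, h1, fun _ => h2 rfl, h3, h4⟩
  have hbtop : ⊤ ≤ span (ZMod 2) (Set.range ((↑) : b → (Fin m → ZMod 2))) := by
    rw [Subtype.range_coe]
    rw [← hspan]
    exact span_le.2 hbsp
  let B : Basis b (ZMod 2) (Fin m → ZMod 2) := Basis.mk hbli hbtop
  haveI : Fintype b := Fintype.ofFinite b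
  have hcardb : Fintype.card b = m := by
    have := Module.finrank_eq_card_basis B
    rw [Module.finrank_pi] at this
    simpa using this.symm
  -- index selection
  have hex : ∀ w : b, ∃ i, M i = (w : Fin m → ZMod 2) := fun w => hbt w.2
  let idx : b → Fin r := fun w => if (w : Fin m → ZMod 2) = v then i0 else (hex w).choose
  have hidx : ∀ w, M (idx w) = (w : Fin m → ZMod 2) := by
    intro w
    by_cases hw : (w : Fin m → ZMod 2) = v
    · simp only [idx, if_pos hw, hw, hvdef, if_true]
    · simp only [idx, if_neg hw]; exact (hex w).choose_spec
  have hinj : Function.Injective idx := by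
    intro w1 w2 h
    have : M (idx w1) = M (idx w2) := by rw [h]
    rw [hidx, hidx] at this
    exact Subtype.ext this
  -- reconstruction for any j
  have hrec : ∀ j : Fin m,
      ∑ i ∈ (B.repr (Pi.single j 1)).support.image idx, M i = Pi.single j 1 := by
    intro j
    erw [Finset.sum_image (fun x _ y _ h => hinj h)]
    have : ∀ w ∈ (B.repr (Pi.single j 1)).support, M (idx w)
        = B.repr (Pi.single j 1) w • (B w) := by
      intro w hw
      rw [hidx, zmod2_one (Finsupp.mem_support_iff.1 hw), one_smul, Basis.mk_apply]
    rw [Finset.sum_congr rfl this]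
    rw [Finset.sum_subset (Finset.subset_univ _)]
    · exact B.sum_repr _
    · intro w _ hw
      rw [Finsupp.notMem_support_iff.1 hw, zero_smul]
  have hcardim : ∀ j : Fin m, ((B.repr (Pi.single j 1)).support.image idx).card
      = (B.repr (Pi.single j 1)).support.card := fun j =>
    Finset.card_image_of_injective _ hinj
  by_cases hv : v = 0
  · -- v = 0 : find j with small support
    have hkey : ∃ j : Fin m, (B.repr (Pi.single j 1)).support.card ≤ m - 1 := by
      by_contra hcon
      push_neg at hcon
      have hfull : ∀ j : Fin m, (B.repr (Pi.single j 1)).support = Finset.univ := by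
        intro j
        apply Finset.eq_univ_of_card
        have h1 : (B.repr (Pi.single j 1)).support.card ≤ Fintype.card b :=
          Finset.card_le_univ _
        have h2 := hcon j
        omega
      have hone : ∀ j : Fin m, ∀ w : b, B.repr (Pi.single j 1) w = 1 := by
        intro j w
        apply zmod2_one
        rw [← Finsupp.mem_support_iff, hfull j]
        exact Finset.mem_univ w
      set j0 : Fin m := ⟨0, by omega⟩
      set j1 : Fin m := ⟨1, by omega⟩
      have hrepr : B.repr (Pi.single j0 1) = B.repr (Pi.single j1 1) := by
        ext w; rw [hone j0 w, hone j1 w]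
      have := B.repr.injective hrepr
      have := congrFun this j0
      simp only [Pi.single_apply] at this
      simp [j0, j1, Fin.ext_iff] at this
    obtain ⟨j, hj⟩ := hkey
    have hni : i0 ∉ (B.repr (Pi.single j 1)).support.image idx := by
      intro hmem
      obtain ⟨w, hw, hwe⟩ := Finset.mem_image.1 hmem
      have : M i0 = (w : Fin m → ZMod 2) := by rw [← hwe, hidx]
      have hw0 : (w : Fin m → ZMod 2) ≠ 0 := hbli.ne_zero w
      rw [← this, ← hvdef, hv] at hw0
      exact hw0 rfl
    refine ⟨insert i0 ((B.repr (Pi.single j 1)).support.image idx),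
      Finset.mem_insert_self _ _, ?_, j, ?_⟩
    · rw [Finset.card_insert_of_notMem hni, hcardim]
      omega
    · erw [Finset.sum_insert hni, hrec j, ← hvdef, hv, zero_add]
  · -- v ≠ 0 : find j with v-coordinate nonzero
    have hvmem : v ∈ b := hvb hv
    have hkey : ∃ j : Fin m, B.repr (Pi.single j 1) ⟨v, hvmem⟩ ≠ 0 := by
      by_contra hcon
      push_neg at hcon
      have hvv : B.repr v ⟨v, hvmem⟩ = 1 := by
        have h2 : B.repr (B ⟨v, hvmem⟩) ⟨v, hvmem⟩ = 1 := by rw [B.repr_self]; simp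
        rw [Basis.mk_apply] at h2
        exact h2
      have hsum : v = ∑ j : Fin m, (v j) • Pi.single j (1 : ZMod 2) := by
        conv_lhs => rw [← Finset.univ_sum_single v]
        apply Finset.sum_congr rfl
        intro j _
        rw [← Pi.single_smul, smul_eq_mul, mul_one]
      have h0 : B.repr (∑ j : Fin m, (v j) • Pi.single j (1:ZMod 2)) ⟨v, hvmem⟩ = 0 := by
        rw [map_sum, Finsupp.finset_sum_apply]
        apply Finset.sum_eq_zero
        intro j _
        rw [map_smul, Finsupp.smul_apply, hcon j, smul_zero]
      rw [← hsum, hvv] at h0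
      exact one_ne_zero h0
    obtain ⟨j, hj⟩ := hkey
    have hmem0 : i0 ∈ (B.repr (Pi.single j 1)).support.image idx := by
      apply Finset.mem_image.2
      refine ⟨⟨v, hvmem⟩, Finsupp.mem_support_iff.2 hj, ?_⟩
      simp only [idx, if_pos rfl]
    refine ⟨(B.repr (Pi.single j 1)).support.image idx, hmem0, ?_, j, hrec j⟩
    rw [hcardim]
    calc (B.repr (Pi.single j 1)).support.card ≤ Fintype.card b := Finset.card_le_univ _
      _ = m := hcardb
end

section
/- The number of binary r×m matrices of rank m (with m ≤ r) is at most 2^{mr}, and if 2^{mr}·(1 − m·2^{−m})^N < 1 then there exists a set of N vectors in F_2^r such that every r×m binary matrix of rank m admits a vector a in the set with wt(aM) = 1. -/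
open Finset Matrix

lemma surj_of_rank {r m : ℕ} (M : Matrix (Fin r) (Fin m) (ZMod 2))
    (hM : M.rank = m) : Function.Surjective (M.vecMulLinear) := by
  rw [← LinearMap.range_eq_top]
  apply Submodule.eq_top_of_finrank_eq
  have h1 : M.vecMulLinear = Mᵀ.mulVecLin := by
    ext v i
    simp [Matrix.mulVec_transpose]
  rw [h1, ← Matrix.rank, Matrix.rank_transpose, hM, Module.finrank_pi]
  simp

lemma fiber_card_const {r m : ℕ} (T : (Fin r → ZMod 2) →ₗ[ZMod 2] (Fin m → ZMod 2))
    (hT : Function.Surjective T) (w : Fin m → ZMod 2) :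
    (univ.filter fun v => T v = w).card = (univ.filter fun v => T v = 0).card := by
  obtain ⟨v0, hv0⟩ := hT w
  apply Finset.card_bij (fun v _ => v + v0)
  · intro v hv
    simp only [Finset.mem_filter, Finset.mem_univ, true_and] at *
    rw [map_add, hv, hv0]
    funext i
    exact CharTwo.add_self_eq_zero _
  · intro a ha b hb h
    simpa using congrArg (· - v0) h
  · intro b hb
    refine ⟨b - v0, ?_, by abel⟩
    simp only [Finset.mem_filter, Finset.mem_univ, true_and] at *
    rw [map_sub, hb, hv0]
    funext i
    simp [CharTwo.neg_eq]

lemma good_count {r m : ℕ} (hmr : m ≤ r) (T : (Fin r → ZMod 2) →ₗ[ZMod 2] (Fin m → ZMod 2))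
    (hT : Function.Surjective T) :
    m * 2 ^ (r - m) ≤ (univ.filter fun v => hammingNorm (T v) = 1).card := by
  set K := (univ.filter fun v => T v = 0).card with hK
  -- total count
  have htot : 2 ^ m * K = 2 ^ r := by
    have := Finset.card_eq_sum_card_fiberwise
      (f := fun v : Fin r → ZMod 2 => T v) (s := univ) (t := univ) (fun a _ => mem_univ _)
    rw [Finset.sum_congr rfl (fun w _ => fiber_card_const T hT w)] at this
    simp only [Finset.sum_const, smul_eq_mul, Finset.card_univ] at this
    have hc1 : Fintype.card (Fin m → ZMod 2) = 2 ^ m := by simp [Fintype.card_fun]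
    have hc2 : Fintype.card (Fin r → ZMod 2) = 2 ^ r := by simp [Fintype.card_fun]
    rw [hc1, hc2] at this
    exact this.symm
  have hKval : K = 2 ^ (r - m) := by
    have h2 : (2:ℕ) ^ m * 2 ^ (r - m) = 2 ^ r := by
      rw [← pow_add]; congr 1; omega
    have := htot.trans h2.symm
    exact Nat.eq_of_mul_eq_mul_left (by positivity) this
  -- good count
  have hsum : (univ.filter fun v => hammingNorm (T v) = 1).card
      = ∑ w ∈ univ.filter (fun w : Fin m → ZMod 2 => hammingNorm w = 1), K := by
    rw [Finset.card_eq_sum_card_fiberwise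
      (f := fun v : Fin r → ZMod 2 => T v)
      (t := univ.filter (fun w : Fin m → ZMod 2 => hammingNorm w = 1))
      (fun a ha => by simpa using (Finset.mem_filter.mp ha).2)]
    apply Finset.sum_congr rfl
    intro w hw
    rw [Finset.filter_filter]
    have : (univ.filter fun v => hammingNorm (T v) = 1 ∧ T v = w)
        = univ.filter fun v => T v = w := by
      apply Finset.filter_congr
      intro v _
      constructor
      · exact fun h => h.2
      · intro h
        exact ⟨by rw [h]; exact (Finset.mem_filter.mp hw).2, h⟩
    rw [this, fiber_card_const T hT w]
  rw [hsum, Finset.sum_const, smul_eq_mul, hKval]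
  apply Nat.mul_le_mul_right
  -- at least m weight-one words
  have key := Finset.card_le_card_of_injOn (s := (univ : Finset (Fin m)))
    (t := univ.filter (fun w : Fin m → ZMod 2 => hammingNorm w = 1))
    (fun i : Fin m => Pi.single i 1) ?_ ?_
  · simpa using key
  · intro i _
    simp only [Finset.mem_coe, Finset.mem_filter, Finset.mem_univ, true_and]
    unfold hammingNorm
    rw [show ({j | Pi.single (M := fun _ => ZMod 2) i 1 j ≠ 0} : Finset (Fin m)) = {i} by
      ext j
      by_cases h : j = i <;> simp [Pi.single_apply, h]]
    exact Finset.card_singleton i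
  · intro a _ b _ h
    by_contra hab
    have := congrFun h a
    simp [Pi.single_apply, hab] at this


lemma bad_count {r m : ℕ} (hmr : m ≤ r) (M : Matrix (Fin r) (Fin m) (ZMod 2))
    (hM : M.rank = m) :
    (univ.filter fun v : Fin r → ZMod 2 => hammingNorm (Matrix.vecMul v M) ≠ 1).card
      ≤ 2 ^ r - m * 2 ^ (r - m) := by
  have hsurj := surj_of_rank M hM
  have hgood := good_count hmr M.vecMulLinear hsurj
  have heq : (univ.filter fun v : Fin r → ZMod 2 => hammingNorm (M.vecMulLinear v) = 1)
      = (univ.filter fun v : Fin r → ZMod 2 => hammingNorm (Matrix.vecMul v M) = 1) := rfl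
  rw [heq] at hgood
  have hsplit : (univ.filter fun v : Fin r → ZMod 2 => hammingNorm (Matrix.vecMul v M) = 1).card
      + (univ.filter fun v : Fin r → ZMod 2 => hammingNorm (Matrix.vecMul v M) ≠ 1).card
      = 2 ^ r := by
    simp only [ne_eq]
    rw [Finset.card_filter_add_card_filter_not, Finset.card_univ]
    simp [Fintype.card_fun]
  omega

theorem stmt12 (r m N : ℕ) (hmr : m ≤ r) :
    (Finset.univ.filter
        (fun M : Matrix (Fin r) (Fin m) (ZMod 2) => M.rank = m)).card ≤
      2 ^ (m * r) ∧
    ((2 : ℝ) ^ (m * r) * (1 - (m : ℝ) / 2 ^ m) ^ N < 1 →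
      ∃ a : Fin N → Fin r → ZMod 2,
        ∀ M : Matrix (Fin r) (Fin m) (ZMod 2), M.rank = m →
          ∃ i, hammingNorm (Matrix.vecMul (a i) M) = 1) := by
  classical
  have hcardM : Fintype.card (Matrix (Fin r) (Fin m) (ZMod 2)) = 2 ^ (m * r) := by
    have : Fintype.card (Matrix (Fin r) (Fin m) (ZMod 2))
        = Fintype.card (Fin r → Fin m → ZMod 2) := Fintype.card_congr (Equiv.refl _)
    rw [this]; simp [Fintype.card_fun, pow_mul]
  set ranks := (univ.filter (fun M : Matrix (Fin r) (Fin m) (ZMod 2) => M.rank = m)) with hranks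
  have hpart1 : ranks.card ≤ 2 ^ (m * r) := by
    refine (Finset.card_filter_le _ _).trans ?_
    rw [Finset.card_univ, hcardM]
  refine ⟨hpart1, fun hyp => ?_⟩
  -- basic facts
  have hm2 : m * 2 ^ (r - m) ≤ 2 ^ r := by
    calc m * 2 ^ (r - m) ≤ 2 ^ m * 2 ^ (r - m) :=
          Nat.mul_le_mul_right _ (Nat.lt_two_pow_self (n := m)).le
      _ = 2 ^ r := by rw [← pow_add]; congr 1; omega
  set b : ℕ := 2 ^ r - m * 2 ^ (r - m) with hb
  -- bad tuples
  set Bad := (univ.filter (fun a : Fin N → Fin r → ZMod 2 =>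
    ∃ M ∈ ranks, ∀ i, hammingNorm (Matrix.vecMul (a i) M) ≠ 1)) with hBad
  have hsub : Bad ⊆ ranks.biUnion (fun M =>
      Fintype.piFinset (fun _ : Fin N =>
        univ.filter fun v : Fin r → ZMod 2 => hammingNorm (Matrix.vecMul v M) ≠ 1)) := by
    intro a ha
    simp only [hBad, Finset.mem_filter, Finset.mem_univ, true_and] at ha
    obtain ⟨M, hM, hMa⟩ := ha
    simp only [Finset.mem_biUnion]
    exact ⟨M, hM, Fintype.mem_piFinset.mpr fun i =>
      Finset.mem_filter.mpr ⟨Finset.mem_univ _, hMa i⟩⟩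
  have hBadcard : Bad.card ≤ ranks.card * b ^ N := by
    refine (Finset.card_le_card hsub).trans ?_
    refine (Finset.card_biUnion_le).trans ?_
    calc ∑ M ∈ ranks, (Fintype.piFinset (fun _ : Fin N =>
            univ.filter fun v : Fin r → ZMod 2 => hammingNorm (Matrix.vecMul v M) ≠ 1)).card
        ≤ ∑ M ∈ ranks, b ^ N := by
          refine Finset.sum_le_sum fun M hM => ?_
          simp only [Fintype.card_piFinset_const, Fintype.card_fin]
          refine Nat.pow_le_pow_left ?_ N
          exact bad_count hmr M (by simpa [hranks] using hM)
      _ = ranks.card * b ^ N := by rw [Finset.sum_const, smul_eq_mul]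
  -- real estimate
  have hbR : (b : ℝ) = 2 ^ r * (1 - (m : ℝ) / 2 ^ m) := by
    have : ((2:ℝ) ^ r) * ((m:ℝ) / 2 ^ m) = (m : ℝ) * 2 ^ (r - m) := by
      rw [mul_div_assoc', mul_comm ((2:ℝ)^r), mul_div_assoc]
      congr 1
      rw [eq_comm, eq_div_iff (by positivity), ← pow_add]
      congr 1; omega
    rw [mul_sub, mul_one, this]
    push_cast [hb, hm2]
    ring
  have hone : (0:ℝ) ≤ 1 - (m : ℝ) / 2 ^ m := by
    rw [sub_nonneg, div_le_one (by positivity)]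
    exact_mod_cast (Nat.lt_two_pow_self (n := m)).le
  have hlt : (Bad.card : ℝ) < (2 ^ r : ℝ) ^ N := by
    calc (Bad.card : ℝ) ≤ (ranks.card : ℝ) * (b : ℝ) ^ N := by exact_mod_cast hBadcard
      _ ≤ (2 : ℝ) ^ (m * r) * (b : ℝ) ^ N := by
          refine mul_le_mul_of_nonneg_right ?_ (by positivity)
          exact_mod_cast hpart1
      _ = ((2 : ℝ) ^ (m * r) * (1 - (m : ℝ) / 2 ^ m) ^ N) * (2 ^ r : ℝ) ^ N := by
          rw [hbR, mul_pow]; ring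
      _ < 1 * (2 ^ r : ℝ) ^ N := by
          refine mul_lt_mul_of_pos_right hyp (by positivity)
      _ = (2 ^ r : ℝ) ^ N := one_mul _
  have hltN : Bad.card < Fintype.card (Fin N → Fin r → ZMod 2) := by
    have hcardF : Fintype.card (Fin N → Fin r → ZMod 2) = (2 ^ r) ^ N := by
      simp [Fintype.card_fun]
    rw [hcardF]
    exact_mod_cast hlt
  have : Bad ≠ univ := by
    intro h
    rw [h, Finset.card_univ] at hltN
    exact lt_irrefl _ hltN
  obtain ⟨a, ha⟩ : ∃ a, a ∉ Bad := by
    by_contra h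
    push_neg at h
    exact this (Finset.eq_univ_iff_forall.mpr h)
  refine ⟨a, fun M hM => ?_⟩
  by_contra hcon
  push_neg at hcon
  apply ha
  simp only [hBad, Finset.mem_filter, Finset.mem_univ, true_and]
  exact ⟨M, by simp [hranks, hM], hcon⟩
end

section
/- For the binary [5,1] repetition code C and the parity check set H = {10001, 01100, 01111, 01010} ⊆ C^⊥, every C-correctable erasure set E ⊆ {1,...,5} of size 4 admits some h ∈ H with exactly one 1 in the positions of E, yet the set {2,3,4} is a stopping set for H (no h ∈ H has exactly one 1 in positions {2,3,4}) that does not contain the support of a nonzero codeword of C. -/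
/-- Example: the `[5,1]` repetition code with parity checks
`H = {10001, 01100, 01111, 01010}`. -/
theorem stmt18 :
    let C : Set (Fin 5 → ZMod 2) := {x | ∀ i j, x i = x j}
    let H : Finset (Fin 5 → ZMod 2) :=
      {![1, 0, 0, 0, 1], ![0, 1, 1, 0, 0], ![0, 1, 1, 1, 1], ![0, 1, 0, 1, 0]}
    -- every parity check lies in the dual code
    (∀ h ∈ H, ∀ c ∈ C, dotProduct h c = 0) ∧
    -- H is 4-erasure reducing for C
    (∀ E : Finset (Fin 5), E.card = 4 →
      (¬ ∃ x ∈ C, x ≠ 0 ∧ {j | x j ≠ 0} ⊆ (E : Set (Fin 5))) →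
      ∃ h ∈ H, (E.filter (fun j => h j ≠ 0)).card = 1) ∧
    -- {2,3,4} (1-indexed) is a stopping set for H
    (∀ h ∈ H, (({1, 2, 3} : Finset (Fin 5)).filter (fun j => h j ≠ 0)).card ≠ 1) ∧
    -- which does not contain the support of a nonzero codeword
    (¬ ∃ x ∈ C, x ≠ 0 ∧
      {j | x j ≠ 0} ⊆ (({1, 2, 3} : Finset (Fin 5)) : Set (Fin 5))) := by
  simp only [dotProduct, Set.mem_setOf_eq, Set.subset_def, Set.mem_setOf_eq,
    Finset.mem_coe, ne_eq]
  refine ⟨?_, ?_, ?_, ?_⟩ <;> decide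
end
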